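/- If a is coprime to N, r is the multiplicative order of a modulo N, r is even, and a^(r/2) ≢ -1 (mod N), then at least one of gcd(a^(r/2) - 1, N) and gcd(a^(r/2) + 1, N) is a nontrivial factor of N. -/

import Mathlib

theorem shor_even_order_gives_factor (N : ℕ) (hN : 1 < N) (hodd : Odd N)
    (hcomp : ¬ N.Prime) (a : ℤ) (hcop : IsCoprime a (N : ℤ))
    (r : ℕ) (hr : r = orderOf (a : ZMod N)) (hreven : Even r)
    (hroot : (a : ZMod N) ^ (r / 2) ≠ -1) :
    (Int.gcd (a ^ (r / 2) - 1) N ∣ N ∧ 1 < Int.gcd (a ^ (r / 2) - 1) N ∧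
      Int.gcd (a ^ (r / 2) - 1) N < N) ∨
    (Int.gcd (a ^ (r / 2) + 1) N ∣ N ∧ 1 < Int.gcd (a ^ (r / 2) + 1) N ∧
      Int.gcd (a ^ (r / 2) + 1) N < N) := by
  left
  haveI : NeZero N := ⟨by omega⟩
  set x : ℤ := a ^ (r / 2) with hx
  -- a is a unit in ZMod N
  have hu : IsUnit ((a : ℤ) : ZMod N) := by
    obtain ⟨u, v, h⟩ := hcop
    refine IsUnit.of_mul_eq_one ((u : ℤ) : ZMod N) ?_
    have : (((u * a + v * N : ℤ)) : ZMod N) = 1 := by rw [h]; norm_cast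
    push_cast at this
    simpa [ZMod.natCast_self, mul_comm] using this
  have hrpos : 0 < r := by
    have h0 : 0 < orderOf hu.unit := orderOf_pos _
    rw [hr, ← hu.unit_spec, orderOf_units]
    exact h0
  have hr2pos : 0 < r / 2 := by
    obtain ⟨k, hk⟩ := hreven; omega
  have hr2lt : r / 2 < r := by omega
  have hpow : ((x : ZMod N)) = ((a : ZMod N)) ^ (r / 2) := by push_cast [hx]; ring
  -- N ∣ (x-1)(x+1)
  have hdvd : (N : ℤ) ∣ (x - 1) * (x + 1) := by
    rw [← ZMod.intCast_zmod_eq_zero_iff_dvd]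
    push_cast
    rw [hpow]
    have : ((a : ZMod N)) ^ r = 1 := by rw [hr]; exact pow_orderOf_eq_one _
    have hrr : r / 2 + r / 2 = r := by obtain ⟨k, hk⟩ := hreven; omega
    have h2 : ((a : ZMod N)) ^ (r / 2) * ((a : ZMod N)) ^ (r / 2) = 1 := by
      rw [← pow_add, hrr]; exact this
    ring_nf
    linear_combination h2
  have hx1 : ¬ (N : ℤ) ∣ x - 1 := by
    intro h
    have : ((x - 1 : ℤ) : ZMod N) = 0 := (ZMod.intCast_zmod_eq_zero_iff_dvd _ _).mpr h
    push_cast at this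
    have hx1' : (x : ZMod N) = 1 := by linear_combination this
    rw [hpow] at hx1'
    have : orderOf ((a : ℤ) : ZMod N) ∣ r / 2 := orderOf_dvd_of_pow_eq_one hx1'
    rw [← hr] at this
    have := Nat.le_of_dvd hr2pos this
    omega
  have hx2 : ¬ (N : ℤ) ∣ x + 1 := by
    intro h
    have : ((x + 1 : ℤ) : ZMod N) = 0 := (ZMod.intCast_zmod_eq_zero_iff_dvd _ _).mpr h
    push_cast at this
    apply hroot
    rw [← hpow]
    linear_combination this
  have hdN : (Int.gcd (x - 1) N : ℤ) ∣ (N : ℤ) := Int.gcd_dvd_right _ _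
  refine ⟨by exact_mod_cast hdN, ?_, ?_⟩
  · rcases Nat.lt_or_ge 1 (Int.gcd (x - 1) N) with h | h
    · exact h
    exfalso
    interval_cases h' : Int.gcd (x - 1) N
    · have := Int.gcd_eq_zero_iff.mp h'
      simp at this
      omega
    · have hco : IsCoprime (x - 1) (N : ℤ) := Int.isCoprime_iff_gcd_eq_one.mpr h'
      exact hx2 (hco.symm.dvd_of_dvd_mul_left hdvd)
  · rcases Nat.lt_or_ge (Int.gcd (x - 1) N) N with h | h
    · exact h
    exfalso
    have hle : Int.gcd (x - 1) N ≤ N := Nat.le_of_dvd (by omega) (by exact_mod_cast hdN)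
    have heq : Int.gcd (x - 1) N = N := le_antisymm hle h
    apply hx1
    have := Int.gcd_dvd_left (a := x - 1) (b := N)
    rwa [heq] at this
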